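/- If f : [λ]^2 → λ is an i-bounded coloring (each color class has size at most i, with i finite) and λ → (κ)^2_i holds, then there exists a subset A ⊆ λ of order type κ such that f restricted to [A]^2 is injective. (Galvin's trick: the ordinary partition relation implies the rainbow partition relation.) -/
import Mathlib


open Ordinal Set Cardinal

/-- Galvin's trick: the ordinary partition relation `λ → (κ)²_i` implies the
rainbow partition relation `λ →^poly (κ)²_{i-bdd}` for finite `i ≥ 1`. -/
theorem galvin_trick (lam kap : Ordinal) (i : ℕ) (hi : 1 ≤ i)
    -- the partition relation λ → (κ)²_i :
    (hpart : ∀ g : Ordinal → Ordinal → Fin i,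
      ∃ h : Ordinal → Ordinal, StrictMonoOn h (Set.Iio kap) ∧
        (∀ j < kap, h j < lam) ∧
        ∃ c : Fin i, ∀ j k, j < k → k < kap → g (h j) (h k) = c)
    -- an i-bounded coloring of pairs from λ :
    (f : Ordinal → Ordinal → Ordinal)
    (hbdd : ∀ ξ : Ordinal,
      (#{p : Ordinal × Ordinal // p.1 < p.2 ∧ p.2 < lam ∧ f p.1 p.2 = ξ}) ≤ (i : Cardinal)) :
    -- there is a subset of λ of order type κ on which f is injective :
    ∃ h : Ordinal → Ordinal, StrictMonoOn h (Set.Iio kap) ∧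
      (∀ j < kap, h j < lam) ∧
      ∀ j k j' k', j < k → k < kap → j' < k' → k' < kap →
        f (h j) (h k) = f (h j') (h k') → j = j' ∧ k = k' := by
  classical
  have emb : ∀ ξ : Ordinal,
      {p : Ordinal × Ordinal // p.1 < p.2 ∧ p.2 < lam ∧ f p.1 p.2 = ξ} ↪ Fin i := by
    intro ξ
    have h := hbdd ξ
    have h' : Cardinal.lift.{0} (#{p : Ordinal × Ordinal // p.1 < p.2 ∧ p.2 < lam ∧ f p.1 p.2 = ξ})
        ≤ Cardinal.lift (#(Fin i)) := by
      simpa using h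
    exact Classical.choice (Cardinal.lift_mk_le'.mp h')
  set g : Ordinal → Ordinal → Fin i := fun α β =>
    if hp : α < β ∧ β < lam then emb (f α β) ⟨(α, β), ⟨hp.1, hp.2, rfl⟩⟩ else ⟨0, hi⟩
    with hg
  -- key: the value of `g` computes `emb` at any color `ξ` that `f` takes
  have key : ∀ (a b : Ordinal) (hab : a < b) (hbl : b < lam) (ξ : Ordinal) (hfe : f a b = ξ),
      emb ξ ⟨(a, b), ⟨hab, hbl, hfe⟩⟩ = g a b := by
    rintro a b hab hbl ξ rfl
    simp only [hg]
    rw [dif_pos (And.intro hab hbl)]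
  obtain ⟨h, hmono, hlt, c, hc⟩ := hpart g
  refine ⟨h, hmono, hlt, ?_⟩
  intro j k j' k' hjk hk hj'k' hk' hf
  have hj : j < kap := hjk.trans hk
  have hj' : j' < kap := hj'k'.trans hk'
  have h1 : h j < h k := hmono hj hk hjk
  have h2 : h j' < h k' := hmono hj' hk' hj'k'
  have hl1 : h k < lam := hlt k hk
  have hl2 : h k' < lam := hlt k' hk'
  have e1 : emb (f (h j') (h k')) ⟨(h j, h k), ⟨h1, hl1, hf⟩⟩ = c :=
    (key (h j) (h k) h1 hl1 _ hf).trans (hc j k hjk hk)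
  have e2 : emb (f (h j') (h k')) ⟨(h j', h k'), ⟨h2, hl2, rfl⟩⟩ = c :=
    (key (h j') (h k') h2 hl2 _ rfl).trans (hc j' k' hj'k' hk')
  have := (emb (f (h j') (h k'))).injective (e1.trans e2.symm)
  have hpair : (h j, h k) = (h j', h k') := congrArg Subtype.val this
  exact ⟨hmono.injOn hj hj' (congrArg Prod.fst hpair),
    hmono.injOn hk hk' (congrArg Prod.snd hpair)⟩
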